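/- The generating function for nonempty GDAP bounded between y = 0 and y = 2 counted by length is x^2 (1 + x - x^2)/(x^4 - x^3 - 2x^2 + 1), whose series expansion begins x^2 + x^3 + x^4 + 3x^5 + 2x^6 + 6x^7 + 6x^8 + 11x^9 + 16x^10 + ... -/

import Mathlib

open PowerSeries

/-- A valid step sequence: each step is an up-step `1` or a down-step `-k` (`k ≥ 1`),
and no two down-steps are consecutive. -/
def GoodSteps (p : List ℤ) : Prop :=
  (∀ s ∈ p, s = 1 ∨ s ≤ -1) ∧ List.Chain' (fun a b => a = 1 ∨ b = 1) p

/-- A Dyck path with air pockets: nonempty, valid steps, ends on the x-axis,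
stays weakly above the x-axis. -/
def IsDAP (p : List ℤ) : Prop :=
  p ≠ [] ∧ GoodSteps p ∧ p.sum = 0 ∧ ∀ i, 0 ≤ (p.take i).sum

/-- A grand Dyck path with air pockets: valid steps, ends on the x-axis
(possibly going below it); the empty path is allowed. -/
def IsGDAP (p : List ℤ) : Prop := GoodSteps p ∧ p.sum = 0

/-- Number of DAP of length `n`. -/
noncomputable def dapCount (n : ℕ) : ℕ :=
  Nat.card {p : List ℤ // IsDAP p ∧ p.length = n}

/-- All points of the path have ordinate in `[0,2]`. -/
def Bounded02 (p : List ℤ) : Prop := ∀ i, 0 ≤ (p.take i).sum ∧ (p.take i).sum ≤ 2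

/-- Number of nonempty GDAP of length `n` bounded by `y = 0` and `y = 2`. -/
noncomputable def g02Count (n : ℕ) : ℕ :=
  Nat.card {p : List ℤ // IsGDAP p ∧ p ≠ [] ∧ Bounded02 p ∧ p.length = n}

noncomputable def G02 : PowerSeries ℚ := PowerSeries.mk fun n => (g02Count n : ℚ)

def Cond (h : ℤ) (f : Bool) (p : List ℤ) : Prop :=
  (∀ s ∈ p, s = 1 ∨ s ≤ -1) ∧
  List.Chain' (fun a b => a = 1 ∨ b = 1) p ∧
  (f = true → ∀ s ∈ p.head?, s = 1) ∧
  h + p.sum = 0 ∧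
  ∀ i : ℕ, 0 ≤ h + (p.take i).sum ∧ h + (p.take i).sum ≤ 2

def Pset (n : ℕ) (h : ℤ) (f : Bool) : Set (List ℤ) :=
  {p | Cond h f p ∧ p.length = n}

lemma pset_zero_mem (h : ℤ) (f : Bool) (p : List ℤ) :
    p ∈ Pset 0 h f ↔ (h = 0 ∧ p = []) := by
  simp only [Pset, Set.mem_setOf_eq, List.length_eq_zero_iff]
  constructor
  · rintro ⟨hc, rfl⟩
    have := hc.2.2.2.1
    simp at this
    exact ⟨this, rfl⟩
  · rintro ⟨rfl, rfl⟩
    refine ⟨⟨by simp, by simp [List.Chain'], by simp, by simp, ?_⟩, rfl⟩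
    intro i; simp

lemma cond_cons {h s : ℤ} {f : Bool} {q : List ℤ} :
    Cond h f (s :: q) ↔
      ((s = 1 ∨ (s ≤ -1 ∧ f = false)) ∧ 0 ≤ h ∧ h ≤ 2 ∧ 0 ≤ h + s ∧ h + s ≤ 2 ∧
        Cond (h + s) (decide (s ≠ 1)) q) := by
  unfold Cond
  constructor
  · rintro ⟨mem, chain, hd, sum, bnd⟩
    have h1 := mem s (by simp)
    have hs : s = 1 ∨ (s ≤ -1 ∧ f = false) := by
      rcases h1 with h1 | h1
      · exact Or.inl h1
      · refine Or.inr ⟨h1, ?_⟩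
        cases f with
        | false => rfl
        | true =>
          exfalso
          have := hd rfl s (by simp)
          omega
    have b0 := bnd 0
    have b1 := bnd 1
    simp at b0 b1
    unfold List.Chain' at chain
    rw [List.isChain_cons] at chain
    refine ⟨hs, by omega, by omega, by omega, by omega, ?_, ?_, ?_, ?_, ?_⟩
    · intro t ht; exact mem t (by simp [ht])
    · exact chain.2
    · intro hne t ht
      simp at hne
      rcases chain.1 t ht with h' | h'
      · omega
      · exact h'
    · simp at sum; omega
    · intro i
      have := bnd (i + 1)
      simp [List.take_succ_cons] at this
      constructor <;> omega
  · rintro ⟨hs, h0, h2, hs0, hs2, mem, chain, hd, sum, bnd⟩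
    refine ⟨?_, ?_, ?_, ?_, ?_⟩
    · intro t ht
      rcases List.mem_cons.mp ht with rfl | ht
      · rcases hs with h' | h' 
        · exact Or.inl h'
        · exact Or.inr h'.1
      · exact mem t ht
    · unfold List.Chain'
      rw [List.isChain_cons]
      refine ⟨?_, chain⟩
      intro b hb
      by_cases hse : s = 1
      · exact Or.inl hse
      · exact Or.inr (hd (by simp [hse]) b hb)
    · intro hf t ht
      simp at ht
      rcases hs with h' | h'
      · omega
      · rw [h'.2] at hf; exact absurd hf (by simp)
    · simp; omega
    · intro i
      cases i with
      | zero => simpa using ⟨h0, h2⟩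
      | succ j =>
        have := bnd j
        simp [List.take_succ_cons]
        omega

lemma cond_norm {h h' : ℤ} {f f' : Bool} {q : List ℤ} (hh : h = h') (hf : f = f') :
    Cond h f q ↔ Cond h' f' q := by rw [hh, hf]

lemma eq0F (n : ℕ) : Pset (n+1) 0 false = (fun q => (1:ℤ) :: q) '' Pset n 1 false := by
  ext p
  simp only [Pset, Set.mem_setOf_eq, Set.mem_image]
  constructor
  · rintro ⟨hc, hl⟩
    cases p with
    | nil => simp at hl
    | cons s q =>
      rw [cond_cons] at hc
      obtain ⟨hs, _, _, hb1, hb2, hq⟩ := hc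
      have hs1 : s = 1 := by rcases hs with h | h <;> omega
      subst hs1
      exact ⟨q, ⟨(cond_norm (by norm_num) (by decide)).mp hq, by simpa using hl⟩, rfl⟩
  · rintro ⟨q, ⟨hq, hl⟩, rfl⟩
    refine ⟨cond_cons.mpr ⟨Or.inl rfl, by norm_num, by norm_num, by norm_num, by norm_num,
      (cond_norm (by norm_num) (by decide)).mpr hq⟩, by simp [hl]⟩

lemma eq0T (n : ℕ) : Pset (n+1) 0 true = (fun q => (1:ℤ) :: q) '' Pset n 1 false := by
  ext p
  simp only [Pset, Set.mem_setOf_eq, Set.mem_image]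
  constructor
  · rintro ⟨hc, hl⟩
    cases p with
    | nil => simp at hl
    | cons s q =>
      rw [cond_cons] at hc
      obtain ⟨hs, _, _, hb1, hb2, hq⟩ := hc
      have hs1 : s = 1 := by rcases hs with h | ⟨_, h⟩; exacts [h, absurd h (by simp)]
      subst hs1
      exact ⟨q, ⟨(cond_norm (by norm_num) (by decide)).mp hq, by simpa using hl⟩, rfl⟩
  · rintro ⟨q, ⟨hq, hl⟩, rfl⟩
    refine ⟨cond_cons.mpr ⟨Or.inl rfl, by norm_num, by norm_num, by norm_num, by norm_num,
      (cond_norm (by norm_num) (by decide)).mpr hq⟩, by simp [hl]⟩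

lemma eq1T (n : ℕ) : Pset (n+1) 1 true = (fun q => (1:ℤ) :: q) '' Pset n 2 false := by
  ext p
  simp only [Pset, Set.mem_setOf_eq, Set.mem_image]
  constructor
  · rintro ⟨hc, hl⟩
    cases p with
    | nil => simp at hl
    | cons s q =>
      rw [cond_cons] at hc
      obtain ⟨hs, _, _, hb1, hb2, hq⟩ := hc
      have hs1 : s = 1 := by rcases hs with h | ⟨_, h⟩; exacts [h, absurd h (by simp)]
      subst hs1
      exact ⟨q, ⟨(cond_norm (by norm_num) (by decide)).mp hq, by simpa using hl⟩, rfl⟩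
  · rintro ⟨q, ⟨hq, hl⟩, rfl⟩
    refine ⟨cond_cons.mpr ⟨Or.inl rfl, by norm_num, by norm_num, by norm_num, by norm_num,
      (cond_norm (by norm_num) (by decide)).mpr hq⟩, by simp [hl]⟩

lemma eq1F (n : ℕ) : Pset (n+1) 1 false =
    (fun q => (1:ℤ) :: q) '' Pset n 2 false ∪ (fun q => (-1:ℤ) :: q) '' Pset n 0 true := by
  ext p
  simp only [Pset, Set.mem_setOf_eq, Set.mem_union, Set.mem_image]
  constructor
  · rintro ⟨hc, hl⟩
    cases p with
    | nil => simp at hl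
    | cons s q =>
      rw [cond_cons] at hc
      obtain ⟨hs, _, _, hb1, hb2, hq⟩ := hc
      have hs1 : s = 1 ∨ s = -1 := by rcases hs with h | h <;> omega
      rcases hs1 with rfl | rfl
      · exact Or.inl ⟨q, ⟨(cond_norm (by norm_num) (by decide)).mp hq, by simpa using hl⟩, rfl⟩
      · exact Or.inr ⟨q, ⟨(cond_norm (by norm_num) (by decide)).mp hq, by simpa using hl⟩, rfl⟩
  · rintro (⟨q, ⟨hq, hl⟩, rfl⟩ | ⟨q, ⟨hq, hl⟩, rfl⟩)
    · exact ⟨cond_cons.mpr ⟨Or.inl rfl, by norm_num, by norm_num, by norm_num, by norm_num,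
        (cond_norm (by norm_num) (by decide)).mpr hq⟩, by simp [hl]⟩
    · exact ⟨cond_cons.mpr ⟨Or.inr ⟨by norm_num, rfl⟩, by norm_num, by norm_num, by norm_num,
        by norm_num, (cond_norm (by norm_num) (by decide)).mpr hq⟩, by simp [hl]⟩

lemma eq2F (n : ℕ) : Pset (n+1) 2 false =
    (fun q => (-1:ℤ) :: q) '' Pset n 1 true ∪ (fun q => (-2:ℤ) :: q) '' Pset n 0 true := by
  ext p
  simp only [Pset, Set.mem_setOf_eq, Set.mem_union, Set.mem_image]
  constructor
  · rintro ⟨hc, hl⟩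
    cases p with
    | nil => simp at hl
    | cons s q =>
      rw [cond_cons] at hc
      obtain ⟨hs, _, _, hb1, hb2, hq⟩ := hc
      have hs1 : s = -1 ∨ s = -2 := by rcases hs with h | h <;> omega
      rcases hs1 with rfl | rfl
      · exact Or.inl ⟨q, ⟨(cond_norm (by norm_num) (by decide)).mp hq, by simpa using hl⟩, rfl⟩
      · exact Or.inr ⟨q, ⟨(cond_norm (by norm_num) (by decide)).mp hq, by simpa using hl⟩, rfl⟩
  · rintro (⟨q, ⟨hq, hl⟩, rfl⟩ | ⟨q, ⟨hq, hl⟩, rfl⟩)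
    · exact ⟨cond_cons.mpr ⟨Or.inr ⟨by norm_num, rfl⟩, by norm_num, by norm_num, by norm_num,
        by norm_num, (cond_norm (by norm_num) (by decide)).mpr hq⟩, by simp [hl]⟩
    · exact ⟨cond_cons.mpr ⟨Or.inr ⟨by norm_num, rfl⟩, by norm_num, by norm_num, by norm_num,
        by norm_num, (cond_norm (by norm_num) (by decide)).mpr hq⟩, by simp [hl]⟩

def ab : ℕ → ℕ × ℕ × ℕ × ℕ × ℕ
  | 0 => (1, 0, 0, 1, 0)
  | n+1 =>
    ((ab n).2.1, (ab n).2.2.1 + (ab n).2.2.2.1, (ab n).2.2.2.2 + (ab n).2.2.2.1,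
      (ab n).2.1, (ab n).2.2.1)

lemma cons_inj (s : ℤ) : Function.Injective (fun q : List ℤ => s :: q) :=
  fun a b h => by simpa using h

lemma disj_cons {s t : ℤ} (hst : s ≠ t) (A B : Set (List ℤ)) :
    Disjoint ((fun q => s :: q) '' A) ((fun q => t :: q) '' B) := by
  rw [Set.disjoint_left]
  rintro p ⟨a, _, rfl⟩ ⟨b, _, hb⟩
  simp only [List.cons.injEq] at hb
  exact hst hb.1.symm

structure GoodCards (n : ℕ) : Prop where
  fin0F : (Pset n 0 false).Finite
  fin1F : (Pset n 1 false).Finite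
  fin2F : (Pset n 2 false).Finite
  fin0T : (Pset n 0 true).Finite
  fin1T : (Pset n 1 true).Finite
  c0F : (Pset n 0 false).ncard = (ab n).1
  c1F : (Pset n 1 false).ncard = (ab n).2.1
  c2F : (Pset n 2 false).ncard = (ab n).2.2.1
  c0T : (Pset n 0 true).ncard = (ab n).2.2.2.1
  c1T : (Pset n 1 true).ncard = (ab n).2.2.2.2

lemma master : ∀ n, GoodCards n := by
  intro n
  induction n with
  | zero =>
    have h0 : ∀ f, Pset 0 (0:ℤ) f = {[]} := by
      intro f; ext p; simp [pset_zero_mem]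
    have h1 : ∀ (h : ℤ) f, h ≠ 0 → Pset 0 h f = ∅ := by
      intro h f hh; ext p; simp [pset_zero_mem, hh]
    constructor <;>
      simp [h0, h1 1 _ (by norm_num), h1 2 _ (by norm_num), ab]
  | succ n ih =>
    obtain ⟨f0F, f1F, f2F, f0T, f1T, c0F, c1F, c2F, c0T, c1T⟩ := ih
    have i0F := eq0F n
    have i0T := eq0T n
    have i1T := eq1T n
    have i1F := eq1F n
    have i2F := eq2F n
    constructor
    · rw [i0F]; exact f1F.image _
    · rw [i1F]; exact (f2F.image _).union (f0T.image _)
    · rw [i2F]; exact (f1T.image _).union (f0T.image _)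
    · rw [i0T]; exact f1F.image _
    · rw [i1T]; exact f2F.image _
    · rw [i0F, Set.ncard_image_of_injective _ (cons_inj 1), c1F]; rfl
    · rw [i1F, Set.ncard_union_eq (disj_cons (by norm_num) _ _) (f2F.image _) (f0T.image _),
        Set.ncard_image_of_injective _ (cons_inj 1), Set.ncard_image_of_injective _ (cons_inj (-1)),
        c2F, c0T]
      rfl
    · rw [i2F, Set.ncard_union_eq (disj_cons (by norm_num) _ _) (f1T.image _) (f0T.image _),
        Set.ncard_image_of_injective _ (cons_inj (-1)), Set.ncard_image_of_injective _ (cons_inj (-2)),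
        c1T, c0T]
      rfl
    · rw [i0T, Set.ncard_image_of_injective _ (cons_inj 1), c1F]; rfl
    · rw [i1T, Set.ncard_image_of_injective _ (cons_inj 1), c2F]; rfl

lemma ab_rec (m : ℕ) :
    (ab (m+5)).1 + (ab (m+1)).1 = 2 * (ab (m+3)).1 + (ab (m+2)).1 := by
  simp [ab]; ring


lemma g02_eq (n : ℕ) (hn : 1 ≤ n) : g02Count n = (ab n).1 := by
  have hset : {p : List ℤ | IsGDAP p ∧ p ≠ [] ∧ Bounded02 p ∧ p.length = n}
      = Pset n 0 false := by
    ext p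
    simp only [Set.mem_setOf_eq, Pset, IsGDAP, GoodSteps, Bounded02, Cond]
    constructor
    · rintro ⟨⟨⟨hm, hc⟩, hs⟩, _, hb, hl⟩
      exact ⟨⟨hm, hc, by simp, by simpa using hs, by simpa using hb⟩, hl⟩
    · rintro ⟨⟨hm, hc, _, hs, hb⟩, hl⟩
      refine ⟨⟨⟨hm, hc⟩, by simpa using hs⟩, ?_, by simpa using hb, hl⟩
      intro hnil
      rw [hnil] at hl
      simp at hl
      omega
  have : g02Count n = (Pset n 0 false).ncard := by
    rw [g02Count, ← hset, ← Nat.card_coe_set_eq]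
    rfl
  rw [this, (master n).c0F]

lemma g02_zero : g02Count 0 = 0 := by
  rw [g02Count]
  have : IsEmpty {p : List ℤ // IsGDAP p ∧ p ≠ [] ∧ Bounded02 p ∧ p.length = 0} :=
    ⟨fun ⟨p, hp⟩ => hp.2.1 (List.length_eq_zero_iff.mp hp.2.2.2)⟩
  exact Nat.card_of_isEmpty

lemma g02_rec (m : ℕ) :
    (g02Count (m+5) : ℚ) = 2 * g02Count (m+3) + g02Count (m+2) - g02Count (m+1) := by
  rw [g02_eq _ (by omega), g02_eq _ (by omega), g02_eq _ (by omega), g02_eq _ (by omega)]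
  have h := ab_rec m
  have h2 : ((ab (m+5)).1 : ℚ) + (ab (m+1)).1 = 2 * (ab (m+3)).1 + (ab (m+2)).1 := by
    exact_mod_cast h
  linarith

/-- the o.g.f. of nonempty GDAP bounded by `y = 0` and `y = 2` is
`x²(1+x-x²)/(x⁴-x³-2x²+1)`, with series beginning
`x² + x³ + x⁴ + 3x⁵ + 2x⁶ + 6x⁷ + 6x⁸ + 11x⁹ + 16x¹⁰ + ⋯`. -/
theorem stmt12 :
    G02 * (X ^ 4 - X ^ 3 - 2 * X ^ 2 + 1) = X ^ 2 * (1 + X - X ^ 2) ∧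
    g02Count 0 = 0 ∧ g02Count 1 = 0 ∧ g02Count 2 = 1 ∧ g02Count 3 = 1 ∧
    g02Count 4 = 1 ∧ g02Count 5 = 3 ∧ g02Count 6 = 2 ∧ g02Count 7 = 6 ∧
    g02Count 8 = 6 ∧ g02Count 9 = 11 ∧ g02Count 10 = 16 := by
  have v1 : g02Count 1 = 0 := by rw [g02_eq 1 (by omega)]; decide
  have v2 : g02Count 2 = 1 := by rw [g02_eq 2 (by omega)]; decide
  have v3 : g02Count 3 = 1 := by rw [g02_eq 3 (by omega)]; decide
  have v4 : g02Count 4 = 1 := by rw [g02_eq 4 (by omega)]; decide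
  have v5 : g02Count 5 = 3 := by rw [g02_eq 5 (by omega)]; decide
  have v6 : g02Count 6 = 2 := by rw [g02_eq 6 (by omega)]; decide
  have v7 : g02Count 7 = 6 := by rw [g02_eq 7 (by omega)]; decide
  have v8 : g02Count 8 = 6 := by rw [g02_eq 8 (by omega)]; decide
  have v9 : g02Count 9 = 11 := by rw [g02_eq 9 (by omega)]; decide
  have v10 : g02Count 10 = 16 := by rw [g02_eq 10 (by omega)]; decide
  refine ⟨?_, g02_zero, v1, v2, v3, v4, v5, v6, v7, v8, v9, v10⟩
  have expand : G02 * (X ^ 4 - X ^ 3 - 2 * X ^ 2 + 1)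
      = G02 * X ^ 4 - G02 * X ^ 3 - (G02 * X ^ 2 + G02 * X ^ 2) + G02 := by ring
  have expand2 : (X : ℚ⟦X⟧) ^ 2 * (1 + X - X ^ 2) = X ^ 2 + X ^ 3 - X ^ 4 := by ring
  rw [expand, expand2]
  ext n
  simp only [map_add, map_sub, PowerSeries.coeff_mul_X_pow', coeff_X_pow, G02,
    PowerSeries.coeff_mk]
  rcases Nat.lt_or_ge n 5 with hn | hn
  · interval_cases n <;> norm_num [g02_zero, v1, v2, v3, v4]
  · obtain ⟨m, rfl⟩ : ∃ m, n = m + 5 := ⟨n - 5, by omega⟩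
    have h5 : ¬ (m + 5 = 2) := by omega
    have h6 : ¬ (m + 5 = 3) := by omega
    have h7 : ¬ (m + 5 = 4) := by omega
    have hr := g02_rec m
    simp only [if_pos (by omega : 4 ≤ m + 5), if_pos (by omega : 3 ≤ m + 5),
      if_pos (by omega : 2 ≤ m + 5), if_neg h5, if_neg h6, if_neg h7,
      PowerSeries.coeff_mk, show m + 5 - 4 = m + 1 from rfl, show m + 5 - 3 = m + 2 by omega,
      show m + 5 - 2 = m + 3 by omega]
    push_cast at hr ⊢
    linarith
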